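/- Let D be a division ring and let p ∈ D[x] be a nonzero polynomial of degree t. Then the roots of p in D lie in at most t conjugacy classes of D. -/
import Mathlib

open Polynomial

private lemma gm_pow_factor {D : Type*} [DivisionRing D] (a : D) (n : ℕ) :
    ∃ q : Polynomial D, (X : Polynomial D) ^ n = q * (X - C a) + C (a ^ n) := by
  induction n with
  | zero => exact ⟨0, by simp⟩
  | succ n ih =>
    obtain ⟨q, hq⟩ := ih
    refine ⟨q * X + C (a ^ n), ?_⟩
    have h1 : (X : Polynomial D) ^ (n + 1) = ((X : Polynomial D) ^ n) * X := by noncomm_ring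
    have h2 : C (a ^ n) * C a = C (a ^ (n + 1)) := by rw [← C_mul, ← pow_succ]
    rw [h1, hq]
    calc (q * (X - C a) + C (a ^ n)) * X
        = (q * X + C (a ^ n)) * (X - C a) + C (a ^ n) * C a := by
          rw [add_mul, mul_assoc q,
            show (X - C a) * (X : Polynomial D) = X * (X - C a) from X_mul.symm,
            ← mul_assoc, add_mul (q * X), mul_sub (C (a ^ n)) X (C a)]
          abel
      _ = (q * X + C (a ^ n)) * (X - C a) + C (a ^ (n + 1)) := by rw [h2]

private lemma gm_factor {D : Type*} [DivisionRing D] (p : Polynomial D) (a : D) :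
    ∃ q : Polynomial D, p = q * (X - C a) + C (p.eval a) := by
  induction p using Polynomial.induction_on' with
  | add f g hf hg =>
    obtain ⟨qf, hqf⟩ := hf
    obtain ⟨qg, hqg⟩ := hg
    refine ⟨qf + qg, ?_⟩
    rw [eval_add, C_add]
    calc f + g = (qf * (X - C a) + C (f.eval a)) + (qg * (X - C a) + C (g.eval a)) := by
          rw [← hqf, ← hqg]
      _ = (qf + qg) * (X - C a) + (C (f.eval a) + C (g.eval a)) := by noncomm_ring
  | monomial n r =>
    obtain ⟨q, hq⟩ := gm_pow_factor a n
    refine ⟨C r * q, ?_⟩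
    rw [eval_monomial, ← C_mul_X_pow_eq_monomial, hq]
    rw [mul_add, ← mul_assoc, ← C_mul]

private lemma gm_eval_mul_X_sub_C {D : Type*} [DivisionRing D]
    (q : Polynomial D) {a b : D} (hb : b ≠ a) :
    (q * (X - C a)).eval b = q.eval ((b - a) * b * (b - a)⁻¹) * (b - a) := by
  set c := (b - a) * b * (b - a)⁻¹ with hc
  have hba : b - a ≠ 0 := sub_ne_zero.mpr hb
  have key : c * (b - a) = (b - a) * b := by
    rw [hc, mul_assoc, inv_mul_cancel₀ hba, mul_one]
  have keyn : ∀ n : ℕ, c ^ n * (b - a) = (b - a) * b ^ n := by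
    intro n
    induction n with
    | zero => simp
    | succ n ih =>
      rw [pow_succ, pow_succ, mul_assoc, key, ← mul_assoc, ih, mul_assoc]
  induction q using Polynomial.induction_on' with
  | add f g hf hg =>
    rw [add_mul, eval_add, eval_add, hf, hg, add_mul]
  | monomial n r =>
    have hm : (monomial n r : Polynomial D) * (X - C a)
        = monomial (n + 1) r - monomial n (r * a) := by
      rw [mul_sub, monomial_mul_X, monomial_mul_C]
    rw [hm, eval_sub, eval_monomial, eval_monomial, eval_monomial, mul_assoc r (c ^ n) (b - a), keyn,
      sub_mul, mul_sub, ← pow_succ', mul_assoc]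

/-- Gordon–Motzkin: the roots of a nonzero polynomial of degree `t` over a division
ring lie in at most `t` conjugacy classes. -/
theorem gordon_motzkin (D : Type*) [DivisionRing D]
    (p : Polynomial D) (hp : p ≠ 0) :
    (ConjClasses.mk '' {a : D | p.eval a = 0}).Finite ∧
      (ConjClasses.mk '' {a : D | p.eval a = 0}).ncard ≤ p.natDegree := by
  suffices h : ∀ (n : ℕ) (p : Polynomial D), p ≠ 0 → p.natDegree ≤ n →
      (ConjClasses.mk '' {a : D | p.eval a = 0}).Finite ∧
        (ConjClasses.mk '' {a : D | p.eval a = 0}).ncard ≤ p.natDegree from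
    h p.natDegree p hp le_rfl
  intro n
  induction n with
  | zero =>
    intro p hp hd
    rcases eq_or_ne {a : D | p.eval a = 0} ∅ with he | he
    · rw [he]; simp
    · exfalso
      obtain ⟨a, ha⟩ := Set.nonempty_iff_ne_empty.mpr he
      obtain ⟨q, hq⟩ := gm_factor p a
      rw [Set.mem_setOf_eq] at ha
      rw [ha, map_zero, add_zero] at hq
      have hq0 : q ≠ 0 := by rintro rfl; simp at hq; exact hp hq
      have hd' : p.natDegree = q.natDegree + 1 := by
        rw [hq, natDegree_mul hq0 (X_sub_C_ne_zero a), natDegree_X_sub_C]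
      omega
  | succ n ih =>
    intro p hp hd
    rcases eq_or_ne {a : D | p.eval a = 0} ∅ with he | he
    · rw [he]; simp
    · obtain ⟨a, ha⟩ := Set.nonempty_iff_ne_empty.mpr he
      obtain ⟨q, hq⟩ := gm_factor p a
      rw [Set.mem_setOf_eq] at ha
      rw [ha, map_zero, add_zero] at hq
      have hq0 : q ≠ 0 := by rintro rfl; simp at hq; exact hp hq
      have hd' : p.natDegree = q.natDegree + 1 := by
        rw [hq, natDegree_mul hq0 (X_sub_C_ne_zero a), natDegree_X_sub_C]
      have hqd : q.natDegree ≤ n := by omega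
      obtain ⟨hfin, hcard⟩ := ih q hq0 hqd
      have hsub : (ConjClasses.mk '' {b : D | p.eval b = 0}) ⊆
          insert (ConjClasses.mk a) (ConjClasses.mk '' {b : D | q.eval b = 0}) := by
        rintro x ⟨b, hb, rfl⟩
        rw [Set.mem_setOf_eq] at hb
        rcases eq_or_ne b a with rfl | hba
        · exact Set.mem_insert _ _
        · right
          set c := (b - a) * b * (b - a)⁻¹ with hc
          have hb0 : b - a ≠ 0 := sub_ne_zero.mpr hba
          have hroot : q.eval c = 0 := by
            have := gm_eval_mul_X_sub_C q hba
            rw [← hq, hb] at this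
            exact (mul_eq_zero.mp this.symm).resolve_right hb0
          refine ⟨c, hroot, ?_⟩
          have : IsConj b c := by
            refine ⟨Units.mk0 (b - a) hb0, ?_⟩
            show (b - a) * b = c * (b - a)
            rw [hc, mul_assoc, inv_mul_cancel₀ hb0, mul_one]
          exact (ConjClasses.mk_eq_mk_iff_isConj.mpr this.symm)
      have hfin' : (ConjClasses.mk '' {b : D | p.eval b = 0}).Finite :=
        (hfin.insert _).subset hsub
      refine ⟨hfin', ?_⟩
      calc (ConjClasses.mk '' {b : D | p.eval b = 0}).ncard
          ≤ (insert (ConjClasses.mk a) (ConjClasses.mk '' {b : D | q.eval b = 0})).ncard :=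
            Set.ncard_le_ncard hsub (hfin.insert _)
        _ ≤ (ConjClasses.mk '' {b : D | q.eval b = 0}).ncard + 1 :=
            Set.ncard_insert_le _ _
        _ ≤ q.natDegree + 1 := by omega
        _ = p.natDegree := hd'.symm
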